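/- Let k be a positive integer divisible by 4. Then there is an antichain of size 13·((k/2)!)^{16} / 16^{k} in the Bruhat order of A(2k,k); consequently w(2k,k) ≥ 13·((k/2)!)^{16} / 16^{k}. -/

import Mathlib

open Finset

/-- A matrix of zeros and ones. -/
def ZeroOne {m n : ℕ} (A : Matrix (Fin m) (Fin n) ℕ) : Prop :=
  ∀ i j, A i j = 0 ∨ A i j = 1

/-- Sum of the entries of row `i`. -/
def rowSum {m n : ℕ} (A : Matrix (Fin m) (Fin n) ℕ) (i : Fin m) : ℕ :=
  ∑ j, A i j

/-- Sum of the entries of column `j`. -/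
def colSum {m n : ℕ} (A : Matrix (Fin m) (Fin n) ℕ) (j : Fin n) : ℕ :=
  ∑ i, A i j

/-- The class `A(R,S)` of (0,1)-matrices with row sum vector `R` and
column sum vector `S`. -/
def classRS {m n : ℕ} (R : Fin m → ℕ) (S : Fin n → ℕ) :
    Set (Matrix (Fin m) (Fin n) ℕ) :=
  {A | ZeroOne A ∧ (∀ i, rowSum A i = R i) ∧ (∀ j, colSum A j = S j)}

/-- The class `A(n,k)` of square (0,1)-matrices of order `n` with all row
and column sums equal to `k`. -/
def classA (n k : ℕ) : Set (Matrix (Fin n) (Fin n) ℕ) :=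
  classRS (fun _ => k) (fun _ => k)

/-- `sigmaM A i j` is the sum of the entries of the leading submatrix of `A`
on rows `0,…,i` and columns `0,…,j` (0-based), i.e. `σ_{i+1,j+1}(A)` in
1-based notation. -/
def sigmaM {m n : ℕ} (A : Matrix (Fin m) (Fin n) ℕ) (i : Fin m) (j : Fin n) : ℕ :=
  ∑ k ∈ Finset.univ.filter (fun k : Fin m => k ≤ i),
    ∑ l ∈ Finset.univ.filter (fun l : Fin n => l ≤ j), A k l

/-- The Bruhat order: `A ⪯_B C` iff `σ_{ij}(A) ≥ σ_{ij}(C)` for all `i, j`. -/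
def brle {m n : ℕ} (A C : Matrix (Fin m) (Fin n) ℕ) : Prop :=
  ∀ i j, sigmaM C i j ≤ sigmaM A i j

/-- Incomparability in the Bruhat order. -/
def Incomp {m n : ℕ} (A C : Matrix (Fin m) (Fin n) ℕ) : Prop :=
  ¬ brle A C ∧ ¬ brle C A

/-- A set of matrices that is an antichain in the Bruhat order. -/
def IsAntichainB {m n : ℕ} (D : Set (Matrix (Fin m) (Fin n) ℕ)) : Prop :=
  ∀ A ∈ D, ∀ C ∈ D, A ≠ C → Incomp A C

/-- The number of inversions of a (0,1)-matrix: pairs of `1` entries, one of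
which is strictly to the top-right of the other (each unordered pair counted
once, via the representative whose first member is in the lower-indexed row). -/
def nu {m n : ℕ} (A : Matrix (Fin m) (Fin n) ℕ) : ℕ :=
  (Finset.univ.filter (fun p : (Fin m × Fin n) × (Fin m × Fin n) =>
      p.1.1 < p.2.1 ∧ p.2.2 < p.1.2 ∧ A p.1.1 p.1.2 = 1 ∧ A p.2.1 p.2.2 = 1)).card

/-- The conjugate of a matrix: columns in reversed (left-right flipped) order. -/
def conjM {m n : ℕ} (A : Matrix (Fin m) (Fin n) ℕ) : Matrix (Fin m) (Fin n) ℕ :=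
  Matrix.of fun i j => A i j.rev

-- auxiliary material
namespace BruhatAux

/-- The "shift by k" involution on `Fin (2*k)`. -/
def tau (k : ℕ) (hk : 0 < k) (j : Fin (2*k)) : Fin (2*k) :=
  ⟨((j : ℕ) + k) % (2*k), Nat.mod_lt _ (by omega)⟩

lemma tau_val {k : ℕ} (hk : 0 < k) (j : Fin (2*k)) :
    ((tau k hk j : ℕ)) = if (j : ℕ) < k then (j : ℕ) + k else (j : ℕ) - k := by
  have hj := j.isLt
  simp only [tau]
  split_ifs with h
  · exact Nat.mod_eq_of_lt (by omega)
  · rw [Nat.mod_eq_sub_mod (by omega)]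
    have : (j : ℕ) + k - 2*k = (j : ℕ) - k := by omega
    rw [this, Nat.mod_eq_of_lt (by omega)]

lemma tau_side {k : ℕ} (hk : 0 < k) (j : Fin (2*k)) :
    ¬(((tau k hk j : ℕ) < k) ↔ ((j : ℕ) < k)) := by
  have hj := j.isLt
  rw [tau_val hk j]
  split_ifs with h <;> omega

lemma tau_mod {k : ℕ} (hk : 0 < k) (j : Fin (2*k)) :
    (tau k hk j : ℕ) % k = (j : ℕ) % k := by
  have hj := j.isLt
  rw [tau_val hk j]
  split_ifs with h
  · exact Nat.add_mod_right _ _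
  · rw [Nat.mod_eq_of_lt (by omega), Nat.mod_eq_sub_mod (by omega : k ≤ (j:ℕ)),
      Nat.mod_eq_of_lt (by omega)]

lemma tau_tau {k : ℕ} (hk : 0 < k) (j : Fin (2*k)) : tau k hk (tau k hk j) = j := by
  have hj := j.isLt
  apply Fin.ext
  rw [tau_val hk, tau_val hk]
  split_ifs <;> omega

lemma tau_bijective {k : ℕ} (hk : 0 < k) : Function.Bijective (tau k hk) :=
  Function.Involutive.bijective (tau_tau hk)

end BruhatAux

namespace BruhatAux

open Finset

/-- The block matrix `[[B, J-B],[J-B, B]]` encoded via a boolean function. -/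
def Mb (k : ℕ) (b : Fin k → Fin k → Bool) : Matrix (Fin (2*k)) (Fin (2*k)) ℕ :=
  Matrix.of fun i j =>
    if h : (i : ℕ) % k < k ∧ (j : ℕ) % k < k then
      (if ((((i : ℕ) < k) ↔ ((j : ℕ) < k)) ↔ b ⟨(i : ℕ) % k, h.1⟩ ⟨(j : ℕ) % k, h.2⟩ = true)
        then 1 else 0)
    else 0

lemma Mb_zeroOne {k : ℕ} (b : Fin k → Fin k → Bool) : ZeroOne (Mb k b) := by
  intro i j
  unfold Mb
  simp only [Matrix.of_apply]
  split_ifs <;> simp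

lemma Mb_apply {k : ℕ} (hk : 0 < k) (b : Fin k → Fin k → Bool) (i j : Fin (2*k)) :
    Mb k b i j =
      if ((((i : ℕ) < k) ↔ ((j : ℕ) < k)) ↔
          b ⟨(i : ℕ) % k, Nat.mod_lt _ hk⟩ ⟨(j : ℕ) % k, Nat.mod_lt _ hk⟩ = true)
        then 1 else 0 := by
  unfold Mb
  rw [Matrix.of_apply, dif_pos ⟨Nat.mod_lt _ hk, Nat.mod_lt _ hk⟩]

lemma Mb_add_tau_right {k : ℕ} (hk : 0 < k) (b : Fin k → Fin k → Bool) (i j : Fin (2*k)) :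
    Mb k b i j + Mb k b i (tau k hk j) = 1 := by
  rw [Mb_apply hk, Mb_apply hk]
  have hside := tau_side hk j
  have hmod : (⟨(tau k hk j : ℕ) % k, Nat.mod_lt _ hk⟩ : Fin k) =
      ⟨(j : ℕ) % k, Nat.mod_lt _ hk⟩ := Fin.ext (tau_mod hk j)
  rw [hmod]
  split_ifs with h1 h2 h2 <;> first | rfl | (exfalso; tauto)

lemma Mb_add_tau_left {k : ℕ} (hk : 0 < k) (b : Fin k → Fin k → Bool) (i j : Fin (2*k)) :
    Mb k b i j + Mb k b (tau k hk i) j = 1 := by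
  rw [Mb_apply hk, Mb_apply hk]
  have hside := tau_side hk i
  have hmod : (⟨(tau k hk i : ℕ) % k, Nat.mod_lt _ hk⟩ : Fin k) =
      ⟨(i : ℕ) % k, Nat.mod_lt _ hk⟩ := Fin.ext (tau_mod hk i)
  rw [hmod]
  split_ifs with h1 h2 h2 <;> first | rfl | (exfalso; tauto)

lemma Mb_rowSum {k : ℕ} (hk : 0 < k) (b : Fin k → Fin k → Bool) (i : Fin (2*k)) :
    rowSum (Mb k b) i = k := by
  have h2 : rowSum (Mb k b) i + rowSum (Mb k b) i = 2*k := by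
    unfold rowSum
    have hb : ∑ j, Mb k b i j = ∑ j, Mb k b i (tau k hk j) :=
      (Function.Bijective.sum_comp (tau_bijective hk) (fun j => Mb k b i j)).symm
    calc (∑ j, Mb k b i j) + ∑ j, Mb k b i j
        = ∑ j, (Mb k b i j + Mb k b i (tau k hk j)) := by
          nth_rewrite 2 [hb]
          rw [← Finset.sum_add_distrib]
      _ = ∑ _j : Fin (2*k), 1 := by
          exact Finset.sum_congr rfl fun j _ => Mb_add_tau_right hk b i j
      _ = 2*k := by simp
  omega

lemma Mb_colSum {k : ℕ} (hk : 0 < k) (b : Fin k → Fin k → Bool) (j : Fin (2*k)) :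
    colSum (Mb k b) j = k := by
  have h2 : colSum (Mb k b) j + colSum (Mb k b) j = 2*k := by
    unfold colSum
    have hb : ∑ i, Mb k b i j = ∑ i, Mb k b (tau k hk i) j :=
      (Function.Bijective.sum_comp (tau_bijective hk) (fun i => Mb k b i j)).symm
    calc (∑ i, Mb k b i j) + ∑ i, Mb k b i j
        = ∑ i, (Mb k b i j + Mb k b (tau k hk i) j) := by
          nth_rewrite 2 [hb]
          rw [← Finset.sum_add_distrib]
      _ = ∑ _i : Fin (2*k), 1 := by
          exact Finset.sum_congr rfl fun i _ => Mb_add_tau_left hk b i j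
      _ = 2*k := by simp
  omega

lemma Mb_mem_classA {k : ℕ} (hk : 0 < k) (b : Fin k → Fin k → Bool) :
    Mb k b ∈ classA (2*k) k :=
  ⟨Mb_zeroOne b, fun i => Mb_rowSum hk b i, fun j => Mb_colSum hk b j⟩

lemma Mb_injective {k : ℕ} (hk : 0 < k) : Function.Injective (Mb k) := by
  intro b b' hbb
  funext i j
  have hik : (i : ℕ) < 2*k := by omega
  have hjk : (j : ℕ) < 2*k := by omega
  have := congrFun (congrFun hbb ⟨(i : ℕ), hik⟩) ⟨(j : ℕ), hjk⟩
  rw [Mb_apply hk, Mb_apply hk] at this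
  have hmi : ((i : ℕ)) % k = (i : ℕ) := Nat.mod_eq_of_lt i.isLt
  have hfi : (⟨(i : ℕ) % k, Nat.mod_lt _ hk⟩ : Fin k) = i := Fin.ext hmi
  have hmj : ((j : ℕ)) % k = (j : ℕ) := Nat.mod_eq_of_lt j.isLt
  have hfj : (⟨(j : ℕ) % k, Nat.mod_lt _ hk⟩ : Fin k) = j := Fin.ext hmj
  rw [hfi, hfj] at this
  simp only [i.isLt, j.isLt, iff_self, true_iff] at this
  cases hb : b i j <;> cases hb' : b' i j <;> simp_all

end BruhatAux

namespace BruhatAux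

open Finset

lemma sigmaM_as_product {m n : ℕ} (A : Matrix (Fin m) (Fin n) ℕ) (i : Fin m) (j : Fin n) :
    sigmaM A i j = ∑ p ∈ (Finset.univ.filter (fun r : Fin m => r ≤ i)) ×ˢ
      (Finset.univ.filter (fun c : Fin n => c ≤ j)), A p.1 p.2 := by
  rw [Finset.sum_product]
  rfl

/-- The corner sums determine the matrix. -/
lemma sigma_inj {m n : ℕ} {A B : Matrix (Fin m) (Fin n) ℕ}
    (h : ∀ i j, sigmaM A i j = sigmaM B i j) : A = B := by
  have key : ∀ N : ℕ, ∀ i : Fin m, ∀ j : Fin n, (i : ℕ) + (j : ℕ) ≤ N → A i j = B i j := by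
    intro N
    induction N using Nat.strong_induction_on with
    | _ N ih =>
      intro i j hN
      have hmem : (i, j) ∈ (Finset.univ.filter (fun r : Fin m => r ≤ i)) ×ˢ
          (Finset.univ.filter (fun c : Fin n => c ≤ j)) := by
        simp [Finset.mem_product]
      have hA := sigmaM_as_product A i j
      have hB := sigmaM_as_product B i j
      rw [← Finset.add_sum_erase _ _ hmem] at hA hB
      have herase : ∑ p ∈ (((Finset.univ.filter (fun r : Fin m => r ≤ i)) ×ˢ
            (Finset.univ.filter (fun c : Fin n => c ≤ j))).erase (i, j)), A p.1 p.2 =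
          ∑ p ∈ (((Finset.univ.filter (fun r : Fin m => r ≤ i)) ×ˢ
            (Finset.univ.filter (fun c : Fin n => c ≤ j))).erase (i, j)), B p.1 p.2 := by
        apply Finset.sum_congr rfl
        intro p hp
        rw [Finset.mem_erase, Finset.mem_product] at hp
        obtain ⟨hpne, hp1, hp2⟩ := hp
        simp only [Finset.mem_filter] at hp1 hp2
        have h1 : (p.1 : ℕ) ≤ (i : ℕ) := hp1.2
        have h2 : (p.2 : ℕ) ≤ (j : ℕ) := hp2.2
        have hlt : (p.1 : ℕ) + (p.2 : ℕ) < N := by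
          rcases Nat.lt_or_ge ((p.1 : ℕ) + (p.2 : ℕ)) ((i : ℕ) + (j : ℕ)) with hc | hc
          · omega
          · exfalso
            have e1 : (p.1 : ℕ) = (i : ℕ) := by omega
            have e2 : (p.2 : ℕ) = (j : ℕ) := by omega
            exact hpne (Prod.ext (Fin.ext e1) (Fin.ext e2))
        exact ih _ hlt p.1 p.2 le_rfl
      have := h i j
      rw [hA, hB, herase] at this
      dsimp only at this
      omega
  funext i j
  exact key ((i : ℕ) + (j : ℕ)) i j le_rfl

lemma sigmaM_le {k : ℕ} (A : Matrix (Fin (2*k)) (Fin (2*k)) ℕ)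
    (hA : ∀ i, rowSum A i = k) (i j : Fin (2*k)) : sigmaM A i j ≤ 2*k*k := by
  unfold sigmaM
  calc ∑ r ∈ Finset.univ.filter (fun r : Fin (2*k) => r ≤ i),
        ∑ c ∈ Finset.univ.filter (fun c : Fin (2*k) => c ≤ j), A r c
      ≤ ∑ r ∈ Finset.univ.filter (fun r : Fin (2*k) => r ≤ i), ∑ c, A r c := by
        apply Finset.sum_le_sum
        intro r _
        exact Finset.sum_le_sum_of_subset (Finset.filter_subset _ _)
    _ = ∑ r ∈ Finset.univ.filter (fun r : Fin (2*k) => r ≤ i), k := by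
        apply Finset.sum_congr rfl
        intro r _
        exact hA r
    _ ≤ ∑ _r : Fin (2*k), k := Finset.sum_le_sum_of_subset (Finset.filter_subset _ _)
    _ = 2*k*k := by
        rw [Finset.sum_const, smul_eq_mul, Finset.card_univ, Fintype.card_fin]

/-- The sum of all corner sums. -/
def phi {k : ℕ} (A : Matrix (Fin (2*k)) (Fin (2*k)) ℕ) : ℕ :=
  ∑ p : Fin (2*k) × Fin (2*k), sigmaM A p.1 p.2

lemma phi_le {k : ℕ} (A : Matrix (Fin (2*k)) (Fin (2*k)) ℕ)
    (hA : ∀ i, rowSum A i = k) : phi A ≤ 8*k^4 := by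
  unfold phi
  calc ∑ p : Fin (2*k) × Fin (2*k), sigmaM A p.1 p.2
      ≤ ∑ _p : Fin (2*k) × Fin (2*k), 2*k*k :=
        Finset.sum_le_sum fun p _ => sigmaM_le A hA p.1 p.2
    _ = (2*k) * (2*k) * (2*k*k) := by
        rw [Finset.sum_const, smul_eq_mul, Finset.card_univ, Fintype.card_prod,
          Fintype.card_fin]
    _ = 8*k^4 := by ring

/-- Matrices with equal `phi` are equal or incomparable. -/
lemma eq_of_brle_of_phi_eq {k : ℕ} {A C : Matrix (Fin (2*k)) (Fin (2*k)) ℕ}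
    (hphi : phi A = phi C) (hle : brle A C) : A = C := by
  have hpt : ∀ p ∈ (Finset.univ : Finset (Fin (2*k) × Fin (2*k))),
      sigmaM C p.1 p.2 = sigmaM A p.1 p.2 :=
    (Finset.sum_eq_sum_iff_of_le (fun p _ => hle p.1 p.2)).1 (hphi.symm)
  exact (sigma_inj fun i j => (hpt (i, j) (Finset.mem_univ _))).symm

end BruhatAux

namespace BruhatAux

lemma G_lemma : ∀ n : ℕ, 1 ≤ n → (2*n+4)*(2*n+3) ≤ 2^(2*n+3) := by
  intro n
  induction n with
  | zero => omega
  | succ m ih =>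
    intro _
    rcases Nat.eq_zero_or_pos m with hm | hm
    · subst hm; norm_num
    · have h1 := ih hm
      have h2 : 2^(2*(m+1)+3) = 4 * 2^(2*m+3) := by
        rw [show 2*(m+1)+3 = (2*m+3)+2 by ring, pow_add]
        ring
      calc (2*(m+1)+4)*(2*(m+1)+3) ≤ 4*((2*m+4)*(2*m+3)) := by nlinarith
        _ ≤ 4 * 2^(2*m+3) := by omega
        _ = 2^(2*(m+1)+3) := h2.symm

lemma main_ineq : ∀ j : ℕ,
    13 * (8*(4*j+4)^4+1) * (Nat.factorial (2*j+2))^16 ≤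
      2^((4*j+4)*(4*j+4)) * 16^(4*j+4) := by
  intro j
  induction j with
  | zero => decide
  | succ n ih =>
    rcases Nat.eq_zero_or_pos n with hn | hn
    · subst hn; norm_num [Nat.factorial]
    · -- step, n ≥ 1
      have hfact : Nat.factorial (2*(n+1)+2) =
          (2*n+4) * ((2*n+3) * Nat.factorial (2*n+2)) := by
        rw [show 2*(n+1)+2 = (2*n+3)+1 by ring, Nat.factorial_succ,
          show 2*n+3 = (2*n+2)+1 by ring, Nat.factorial_succ]
      have hrhs : 2^((4*(n+1)+4)*(4*(n+1)+4)) * 16^(4*(n+1)+4) =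
          (2^((4*n+4)*(4*n+4)) * 16^(4*n+4)) * (2^(32*n+64)) := by
        have e2 : (16:ℕ)^(4*(n+1)+4) = 16^(4*n+4) * 2^16 := by
          rw [show 4*(n+1)+4 = (4*n+4)+4 by ring, pow_add]
          norm_num
        rw [show (4*(n+1)+4)*(4*(n+1)+4) = (4*n+4)*(4*n+4) + (32*n+48) by ring,
          pow_add, e2]
        ring
      have hb : (4*(n+1)+4)^4 ≤ 16*(4*n+4)^4 := by
        calc (4*(n+1)+4)^4 ≤ (2*(4*n+4))^4 := Nat.pow_le_pow_left (by omega) 4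
          _ = 16*(4*n+4)^4 := by ring
      have hA1 : 8*(4*(n+1)+4)^4+1 ≤ 16*(8*(4*n+4)^4+1) := by nlinarith [hb]
      have hA2 : ((2*n+4)*(2*n+3))^16 ≤ 2^(32*n+48) := by
        calc ((2*n+4)*(2*n+3))^16 ≤ (2^(2*n+3))^16 :=
              Nat.pow_le_pow_left (G_lemma n hn) 16
          _ = 2^(32*n+48) := by rw [← pow_mul]; ring_nf
      rw [hrhs, hfact]
      calc 13 * (8*(4*(n+1)+4)^4+1) * ((2*n+4) * ((2*n+3) * Nat.factorial (2*n+2)))^16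
          = (13 * (8*(4*(n+1)+4)^4+1) * (Nat.factorial (2*n+2))^16) *
              ((2*n+4)*(2*n+3))^16 := by ring
        _ ≤ (13 * (16*(8*(4*n+4)^4+1)) * (Nat.factorial (2*n+2))^16) * 2^(32*n+48) := by
            apply Nat.mul_le_mul
            · apply Nat.mul_le_mul_right
              exact Nat.mul_le_mul_left _ hA1
            · exact hA2
        _ = (13 * (8*(4*n+4)^4+1) * (Nat.factorial (2*n+2))^16) * 2^(32*n+52) := by
            rw [show (32:ℕ)*n+52 = (32*n+48)+4 by ring, pow_add]
            ring
        _ ≤ (2^((4*n+4)*(4*n+4)) * 16^(4*n+4)) * 2^(32*n+52) :=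
            Nat.mul_le_mul_right _ ih
        _ ≤ (2^((4*n+4)*(4*n+4)) * 16^(4*n+4)) * 2^(32*n+64) :=
            Nat.mul_le_mul_left _ (Nat.pow_le_pow_right (by norm_num) (by omega))

lemma two_pow_dvd_fact : ∀ c : ℕ, 2^c ∣ Nat.factorial (2*c) := by
  intro c
  induction c with
  | zero => simp
  | succ n ih =>
    have h : Nat.factorial (2*(n+1)) = (2*n+2) * ((2*n+1) * Nat.factorial (2*n)) := by
      rw [show 2*(n+1) = (2*n+1)+1 by ring, Nat.factorial_succ,
        show 2*n+1 = (2*n)+1 by ring, Nat.factorial_succ]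
    rw [h, pow_succ]
    obtain ⟨d, hd⟩ := ih
    refine ⟨(n+1) * ((2*n+1) * d), ?_⟩
    rw [hd]
    ring

end BruhatAux

open BruhatAux

/-- If `k` is a positive multiple of `4`, then there is an
antichain of size `13·((k/2)!)^{16}/16^k` in the Bruhat order of `A(2k,k)`;
consequently `w(2k,k) ≥ 13·((k/2)!)^{16}/16^k`. -/
theorem width_A2kk_improved (k : ℕ) (hk : 0 < k) (h4 : 4 ∣ k) :
    ∃ D : Set (Matrix (Fin (2*k)) (Fin (2*k)) ℕ),
      D ⊆ classA (2*k) k ∧ IsAntichainB D ∧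
      (D.ncard : ℚ) = 13 * (Nat.factorial (k/2) : ℚ)^16 / 16^k := by
  classical
  obtain ⟨c, hc⟩ := h4
  have hcpos : 0 < c := by omega
  have hk2 : k / 2 = 2 * c := by omega
  set f := Nat.factorial (k / 2) with hf
  -- divisibility
  have hdvd : 16 ^ k ∣ 13 * f ^ 16 := by
    have h1 : (16 : ℕ) ^ k = (2 ^ c) ^ 16 := by
      rw [hc, show (16 : ℕ) = 2 ^ 4 by norm_num, ← pow_mul, ← pow_mul]
      ring_nf
    have h2 : (2 ^ c) ^ 16 ∣ f ^ 16 := by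
      apply pow_dvd_pow_of_dvd
      rw [hf, hk2]
      exact two_pow_dvd_fact c
    exact h1 ▸ h2.mul_left 13
  -- the main counting inequality
  have hmain : 13 * (8 * k ^ 4 + 1) * f ^ 16 ≤ 2 ^ (k * k) * 16 ^ k := by
    have := main_ineq (c - 1)
    have e1 : 4 * (c - 1) + 4 = k := by omega
    have e2 : 2 * (c - 1) + 2 = k / 2 := by omega
    rw [e1, e2] at this
    exact this
  set N := 13 * f ^ 16 / 16 ^ k with hNdef
  have hN16 : N * 16 ^ k = 13 * f ^ 16 := Nat.div_mul_cancel hdvd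
  have hcount : (8 * k ^ 4 + 1) * N ≤ 2 ^ (k * k) := by
    have h16pos : 0 < 16 ^ k := Nat.pow_pos (by norm_num)
    apply Nat.le_of_mul_le_mul_right _ h16pos
    calc (8 * k ^ 4 + 1) * N * 16 ^ k = (8 * k ^ 4 + 1) * (N * 16 ^ k) := by ring
      _ = 13 * (8 * k ^ 4 + 1) * f ^ 16 := by rw [hN16]; ring
      _ ≤ 2 ^ (k * k) * 16 ^ k := hmain
  -- pigeonhole
  have hcards : (Finset.univ : Finset (Fin k → Fin k → Bool)).card = 2 ^ (k * k) := by
    rw [Finset.card_univ]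
    simp [Fintype.card_fun, ← pow_mul]
  have hmaps : ∀ b ∈ (Finset.univ : Finset (Fin k → Fin k → Bool)),
      phi (Mb k b) ∈ Finset.range (8 * k ^ 4 + 1) := by
    intro b _
    rw [Finset.mem_range, Nat.lt_succ_iff]
    exact phi_le (Mb k b) (Mb_rowSum hk b)
  have hmul : (Finset.range (8 * k ^ 4 + 1)).card * N ≤
      (Finset.univ : Finset (Fin k → Fin k → Bool)).card := by
    rw [Finset.card_range, hcards]
    exact hcount
  obtain ⟨t0, -, hfib⟩ :=
    Finset.exists_le_card_fiber_of_mul_le_card_of_maps_to hmaps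
      ⟨0, Finset.mem_range.2 (by omega)⟩ hmul
  obtain ⟨F, hFsub, hFcard⟩ := Finset.exists_subset_card_eq hfib
  have hFphi : ∀ b ∈ F, phi (Mb k b) = t0 := by
    intro b hb
    have := hFsub hb
    simp only [Finset.mem_filter] at this
    exact this.2
  refine ⟨↑(F.image (Mb k)), ?_, ?_, ?_⟩
  · intro A hA
    simp only [Finset.coe_image, Set.mem_image, Finset.mem_coe] at hA
    obtain ⟨b, -, rfl⟩ := hA
    exact Mb_mem_classA hk b
  · intro A hA C hC hne
    simp only [Finset.coe_image, Set.mem_image, Finset.mem_coe] at hA hC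
    obtain ⟨bA, hbA, rfl⟩ := hA
    obtain ⟨bC, hbC, rfl⟩ := hC
    have hphi : phi (Mb k bA) = phi (Mb k bC) := by
      rw [hFphi bA hbA, hFphi bC hbC]
    constructor
    · intro hbr
      exact hne (eq_of_brle_of_phi_eq hphi hbr)
    · intro hbr
      exact hne (eq_of_brle_of_phi_eq hphi.symm hbr).symm
  · rw [Set.ncard_coe_finset, Finset.card_image_of_injective F (Mb_injective hk), hFcard,
      hNdef]
    rw [Nat.cast_div hdvd (by positivity)]
    push_cast
    ring
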